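/- In the polynomial ring k[x] over a field k, let I = ⟨x² + x³⟩, let ξ = -1 (so that the initial form in_<ξ(f) is the sum of terms of lowest degree), and Δ = {0, 1} (corresponding to monomials 1, x). Then: (a) for every monomial x^m with m ∉ Δ, the ideal in_m(I) of coefficients of initial terms equal to x^m is ⟨1⟩, and for m ∈ Δ it is 0 (i.e., I is Δ-monic); but (b) k[x]/I is not a free k-module of rank 2 = #Δ. -/

import Mathlib

open Polynomial

/-- For `I = ⟨x² + x³⟩ ⊆ k[x]`, `ξ = -1` (initial form = terms of lowest degree) and
`Δ = {0,1}`: the ideal `I` is `Δ`-monic (for monomials `x^j` with `j ∉ Δ` the ideal of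
initial coefficients is `⟨1⟩`, and for `j ∈ Δ` it is `0`), but `k[x]/I` is not a free
`k`-module of rank `2 = #Δ`. -/
theorem deltaMonic_not_free_example (k : Type*) [Field k]
    (I : Ideal (Polynomial k)) (hI : I = Ideal.span {X ^ 2 + X ^ 3})
    (inm : ℕ → Ideal k)
    (hinm : ∀ j, inm j =
      Ideal.span {b | ∃ f ∈ I, f ≠ 0 ∧ f.natTrailingDegree = j ∧ f.coeff j = b}) :
    (∀ j : ℕ, j ∉ ({0, 1} : Set ℕ) → inm j = ⊤) ∧
    (∀ j : ℕ, j ∈ ({0, 1} : Set ℕ) → inm j = ⊥) ∧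
    ¬ Nonempty (Module.Basis (Fin 2) k (Polynomial k ⧸ I)) := by
  subst hI
  have hp : (X ^ 2 + X ^ 3 : k[X]) ≠ 0 := by
    intro h
    have := congrArg (fun q => Polynomial.coeff q 2) h
    simp [coeff_X_pow] at this
  refine ⟨?_, ?_, ?_⟩
  · intro j hj
    have hj2 : 2 ≤ j := by
      simp only [Set.mem_insert_iff, Set.mem_singleton_iff, not_or] at hj
      omega
    rw [hinm, Ideal.eq_top_iff_one]
    apply Ideal.subset_span
    refine ⟨X ^ j + X ^ (j + 1), ?_, ?_, ?_, ?_⟩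
    · rw [Ideal.mem_span_singleton]
      refine ⟨X ^ (j - 2), ?_⟩
      rw [add_mul, ← pow_add, ← pow_add, show 2 + (j - 2) = j by omega,
        show 3 + (j - 2) = j + 1 by omega]
    · intro h
      have := congrArg (fun q => Polynomial.coeff q j) h
      simp [coeff_X_pow] at this
    · apply le_antisymm
      · apply natTrailingDegree_le_of_ne_zero
        simp [coeff_X_pow]
      · apply le_natTrailingDegree
        · intro h
          have := congrArg (fun q => Polynomial.coeff q j) h
          simp [coeff_X_pow] at this
        · intro m hm
          rw [coeff_add, coeff_X_pow, coeff_X_pow, if_neg (by omega : ¬ m = j),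
            if_neg (by omega : ¬ m = j + 1), add_zero]
    · simp [coeff_X_pow]
  · intro j hj
    rw [hinm, Ideal.span_eq_bot]
    rintro b ⟨f, hf, hf0, htd, -⟩
    exfalso
    rw [Ideal.mem_span_singleton'] at hf
    obtain ⟨g, rfl⟩ := hf
    have hg : g ≠ 0 := fun h => hf0 (by simp [h])
    have h2 : (X ^ 2 + X ^ 3 : k[X]).natTrailingDegree = 2 := by
      apply le_antisymm
      · apply natTrailingDegree_le_of_ne_zero
        simp [coeff_X_pow]
      · apply le_natTrailingDegree hp
        intro m hm
        interval_cases m <;> simp [coeff_X_pow]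
    rw [natTrailingDegree_mul hg hp, h2] at htd
    simp only [Set.mem_insert_iff, Set.mem_singleton_iff] at hj
    omega
  · rintro ⟨b⟩
    have hdeg : (X ^ 2 + X ^ 3 : k[X]).natDegree = 3 := by
      compute_degree!
    have pb : PowerBasis k (AdjoinRoot (X ^ 2 + X ^ 3 : k[X])) :=
      AdjoinRoot.powerBasis hp
    have h3 : Module.finrank k (AdjoinRoot (X ^ 2 + X ^ 3 : k[X])) = 3 := by
      rw [(AdjoinRoot.powerBasis hp).finrank]
      simpa using hdeg
    have b' : Module.Basis (Fin 2) k (AdjoinRoot (X ^ 2 + X ^ 3 : k[X])) := b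
    have h2 : Module.finrank k (AdjoinRoot (X ^ 2 + X ^ 3 : k[X])) = 2 := by
      rw [Module.finrank_eq_card_basis b']
      simp
    omega
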